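/- The partial sum ∑_{n=1}^{ℓ} 2·Φ(n) is asymptotic to (6/π²)·ℓ² as ℓ → ∞, i.e., the ratio of the sum to (6/π²)ℓ² tends to 1. -/

import Mathlib

open Filter Real Finset Topology

lemma swap_sum (ℓ : ℕ) (F : ℕ × ℕ → ℝ) :
    ∑ n ∈ Finset.Icc 1 ℓ, ∑ x ∈ n.divisorsAntidiagonal, F x
      = ∑ d ∈ Finset.Icc 1 ℓ, ∑ q ∈ Finset.Icc 1 (ℓ / d), F (d, q) := by
  rw [Finset.sum_sigma', Finset.sum_sigma']
  refine Finset.sum_nbij' (fun p => ⟨p.2.1, p.2.2⟩) (fun p => ⟨p.1 * p.2, (p.1, p.2)⟩)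
    ?_ ?_ ?_ ?_ ?_
  · rintro ⟨n, d, q⟩ hp
    simp only [Finset.mem_sigma, Finset.mem_Icc, Nat.mem_divisorsAntidiagonal] at hp ⊢
    obtain ⟨⟨h1, h2⟩, hdq, hn0⟩ := hp
    have hd : 0 < d := by
      rcases Nat.eq_zero_or_pos d with rfl | h
      · simp at hdq; omega
      · exact h
    have hq : 0 < q := by
      rcases Nat.eq_zero_or_pos q with rfl | h
      · simp at hdq; omega
      · exact h
    refine ⟨⟨hd, ?_⟩, hq, ?_⟩
    · calc d ≤ d * q := Nat.le_mul_of_pos_right d hq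
        _ = n := hdq
        _ ≤ ℓ := h2
    · rw [Nat.le_div_iff_mul_le hd, mul_comm, hdq]; exact h2
  · rintro ⟨d, q⟩ hp
    simp only [Finset.mem_sigma, Finset.mem_Icc, Nat.mem_divisorsAntidiagonal] at hp ⊢
    obtain ⟨⟨hd1, hd2⟩, hq1, hq2⟩ := hp
    rw [Nat.le_div_iff_mul_le (by omega)] at hq2
    have h : d * q ≤ ℓ := by rw [mul_comm] at hq2; exact hq2
    exact ⟨⟨Nat.one_le_iff_ne_zero.mpr (by positivity), h⟩, trivial, by positivity⟩
  · rintro ⟨n, d, q⟩ hp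
    simp only [Finset.mem_sigma, Finset.mem_Icc, Nat.mem_divisorsAntidiagonal] at hp
    simp only [Sigma.mk.inj_iff, heq_eq_eq, and_true]
    exact hp.2.1
  · rintro ⟨d, q⟩ _; rfl
  · rintro ⟨n, d, q⟩ _; rfl

lemma gauss_Icc (m : ℕ) : ∑ q ∈ Finset.Icc 1 m, (q : ℝ) = m * (m + 1) / 2 := by
  induction m with
  | zero => simp
  | succ k ih =>
    rw [Finset.sum_Icc_succ_top (by omega), ih]
    push_cast; ring

lemma totient_inv (n : ℕ) (hn : 0 < n) :
    ∑ x ∈ n.divisorsAntidiagonal, ((ArithmeticFunction.moebius x.1 : ℤ) : ℝ) * (x.2 : ℝ)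
      = (Nat.totient n : ℝ) := by
  refine (ArithmeticFunction.sum_eq_iff_sum_mul_moebius_eq
    (f := fun n => (Nat.totient n : ℝ)) (g := fun n => (n : ℝ))).mp ?_ n hn
  intro n hn
  exact_mod_cast Nat.sum_totient n

lemma key_identity (ℓ : ℕ) :
    2 * (∑ n ∈ Finset.Icc 1 ℓ, (Nat.totient n : ℝ))
      = ∑ d ∈ Finset.Icc 1 ℓ, ((ArithmeticFunction.moebius d : ℤ) : ℝ)
          * (((ℓ / d : ℕ) : ℝ) * (((ℓ / d : ℕ) : ℝ) + 1)) := by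
  have h1 : ∑ n ∈ Finset.Icc 1 ℓ, (Nat.totient n : ℝ)
      = ∑ n ∈ Finset.Icc 1 ℓ, ∑ x ∈ n.divisorsAntidiagonal,
          ((ArithmeticFunction.moebius x.1 : ℤ) : ℝ) * (x.2 : ℝ) := by
    refine Finset.sum_congr rfl fun n hn => ?_
    rw [totient_inv n (by simp at hn; omega)]
  rw [h1, swap_sum ℓ (fun x => ((ArithmeticFunction.moebius x.1 : ℤ) : ℝ) * (x.2 : ℝ))]
  rw [Finset.mul_sum]
  refine Finset.sum_congr rfl fun d hd => ?_
  simp only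
  rw [← Finset.mul_sum, gauss_Icc]
  ring

lemma moebius_tsum :
    ∑' d : ℕ, ((ArithmeticFunction.moebius d : ℤ) : ℝ) / (d : ℝ) ^ 2 = 6 / Real.pi ^ 2 := by
  have hre : (1 : ℝ) < (2 : ℂ).re := by norm_num
  have h1 := ArithmeticFunction.LSeries_zeta_mul_Lseries_moebius (s := 2) hre
  rw [ArithmeticFunction.LSeries_zeta_eq_riemannZeta hre, riemannZeta_two] at h1
  have hpi : (Real.pi : ℂ) ^ 2 / 6 ≠ 0 := by
    simp [Complex.ofReal_ne_zero, Real.pi_ne_zero]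
  have hmu : LSeries (fun n : ℕ => ((ArithmeticFunction.moebius n : ℤ) : ℂ)) 2
      = 6 / (Real.pi : ℂ) ^ 2 := by
    have hp2 : ((Real.pi : ℂ)) ^ 2 ≠ 0 :=
      pow_ne_zero 2 (Complex.ofReal_ne_zero.mpr Real.pi_ne_zero)
    field_simp at h1
    rw [eq_div_iff hp2]
    linear_combination h1
  -- identify the LSeries with the complex tsum of the real terms
  have h2 : LSeries (fun n : ℕ => ((ArithmeticFunction.moebius n : ℤ) : ℂ)) 2
      = ∑' d : ℕ, ((((ArithmeticFunction.moebius d : ℤ) : ℝ) / (d : ℝ) ^ 2 : ℝ) : ℂ) := by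
    unfold LSeries
    refine tsum_congr fun d => ?_
    rcases eq_or_ne d 0 with rfl | hd
    · simp [LSeries.term_zero]
    · rw [LSeries.term_of_ne_zero hd, show (2 : ℂ) = ((2 : ℕ) : ℂ) by norm_num,
        Complex.cpow_natCast]
      push_cast
      ring
  rw [h2] at hmu
  rw [← Complex.ofReal_tsum] at hmu
  have : ((6 / Real.pi ^ 2 : ℝ) : ℂ) = 6 / (Real.pi : ℂ) ^ 2 := by push_cast; ring
  exact Complex.ofReal_injective (by rw [hmu, this])

lemma floor_div_tendsto (d : ℕ) (hd : 0 < d) :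
    Tendsto (fun ℓ : ℕ => ((ℓ / d : ℕ) : ℝ) / (ℓ : ℝ)) atTop (𝓝 (1 / (d : ℝ))) := by
  have hmod : Tendsto (fun ℓ : ℕ => ((ℓ % d : ℕ) : ℝ) / (ℓ : ℝ)) atTop (𝓝 0) := by
    refine squeeze_zero (fun ℓ => by positivity) (fun ℓ => ?_) (tendsto_const_div_atTop_nhds_zero_nat (d : ℝ))
    rcases Nat.eq_zero_or_pos ℓ with rfl | hl
    · simp
    · exact div_le_div_of_nonneg_right (by exact_mod_cast (Nat.mod_lt ℓ hd).le) (by positivity) |>.trans le_rfl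
  have h2 : Tendsto (fun ℓ : ℕ => (1 - ((ℓ % d : ℕ) : ℝ) / (ℓ : ℝ)) / (d : ℝ)) atTop
      (𝓝 ((1 - 0) / (d : ℝ))) := (tendsto_const_nhds.sub hmod).div_const _
  rw [sub_zero] at h2
  refine h2.congr' ?_
  filter_upwards [eventually_ge_atTop 1] with ℓ hl
  have hl0 : (ℓ : ℝ) ≠ 0 := by positivity
  have hd0 : (d : ℝ) ≠ 0 := by positivity
  have hdm : (d : ℝ) * ((ℓ / d : ℕ) : ℝ) + ((ℓ % d : ℕ) : ℝ) = (ℓ : ℝ) := by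
    exact_mod_cast Nat.div_add_mod ℓ d
  field_simp
  nlinarith [hdm]

noncomputable def Fterm (ℓ d : ℕ) : ℝ :=
  if 1 ≤ d ∧ d ≤ ℓ then
    ((ArithmeticFunction.moebius d : ℤ) : ℝ)
      * (((ℓ / d : ℕ) : ℝ) * (((ℓ / d : ℕ) : ℝ) + 1)) / (ℓ : ℝ) ^ 2
  else 0

lemma Fterm_tendsto (d : ℕ) :
    Tendsto (fun ℓ : ℕ => Fterm ℓ d) atTop
      (𝓝 (((ArithmeticFunction.moebius d : ℤ) : ℝ) / (d : ℝ) ^ 2)) := by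
  rcases Nat.eq_zero_or_pos d with rfl | hd
  · simp [Fterm]
  · have hA := floor_div_tendsto d hd
    have hinv : Tendsto (fun ℓ : ℕ => 1 / (ℓ : ℝ)) atTop (𝓝 0) := by
      simpa using tendsto_const_div_atTop_nhds_zero_nat (1 : ℝ)
    have h2 : Tendsto (fun ℓ : ℕ =>
        ((ArithmeticFunction.moebius d : ℤ) : ℝ) *
          ((((ℓ / d : ℕ) : ℝ) / ℓ) * ((((ℓ / d : ℕ) : ℝ) / ℓ) + 1 / (ℓ : ℝ)))) atTop
        (𝓝 (((ArithmeticFunction.moebius d : ℤ) : ℝ) * ((1 / d) * (1 / (d : ℝ) + 0)))) :=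
      tendsto_const_nhds.mul (hA.mul (hA.add hinv))
    have heq : ((ArithmeticFunction.moebius d : ℤ) : ℝ) * ((1 / d) * (1 / (d : ℝ) + 0))
        = ((ArithmeticFunction.moebius d : ℤ) : ℝ) / (d : ℝ) ^ 2 := by
      field_simp
      try ring
      try tauto
    rw [heq] at h2
    refine h2.congr' ?_
    filter_upwards [eventually_ge_atTop d, eventually_ge_atTop 1] with ℓ hld hl1
    have hl0 : (ℓ : ℝ) ≠ 0 := by
      have : (1 : ℕ) ≤ ℓ := hl1
      positivity
    rw [Fterm, if_pos ⟨hd, hld⟩]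
    field_simp
    try ring
    try tauto

lemma Fterm_bound (ℓ : ℕ) (hℓ : 1 ≤ ℓ) (d : ℕ) : ‖Fterm ℓ d‖ ≤ 2 / (d : ℝ) ^ 2 := by
  rw [Fterm]
  split_ifs with h
  · obtain ⟨hd1, hdl⟩ := h
    have hd0 : (0 : ℝ) < (d : ℝ) := by exact_mod_cast hd1
    have hl0 : (0 : ℝ) < (ℓ : ℝ) := by exact_mod_cast hℓ
    set x : ℝ := ((ℓ / d : ℕ) : ℝ) with hxdef
    have hx0 : 0 ≤ x := Nat.cast_nonneg _
    have hxd : x * (d : ℝ) ≤ (ℓ : ℝ) := by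
      rw [hxdef]
      exact_mod_cast Nat.div_mul_le_self ℓ d
    have hdl' : (d : ℝ) ≤ ℓ := by exact_mod_cast hdl
    have hmu : |((ArithmeticFunction.moebius d : ℤ) : ℝ)| ≤ 1 := by
      exact_mod_cast ArithmeticFunction.abs_moebius_le_one (n := d)
    rw [norm_div, norm_mul, Real.norm_eq_abs, Real.norm_eq_abs, Real.norm_eq_abs]
    have hxx : |x * (x + 1)| = x * (x + 1) := abs_of_nonneg (by nlinarith)
    have hll : |(ℓ : ℝ) ^ 2| = (ℓ : ℝ) ^ 2 := abs_of_nonneg (by positivity)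
    rw [hxx, hll]
    have h2l : (x + 1) * (d : ℝ) ≤ 2 * (ℓ : ℝ) := by nlinarith
    have key : x * (x + 1) * (d : ℝ) ^ 2 ≤ 2 * (ℓ : ℝ) ^ 2 := by
      nlinarith [mul_le_mul hxd h2l (by positivity) (by positivity)]
    calc |((ArithmeticFunction.moebius d : ℤ) : ℝ)| * (x * (x + 1)) / (ℓ : ℝ) ^ 2
        ≤ 1 * (x * (x + 1)) / (ℓ : ℝ) ^ 2 := by
          apply div_le_div_of_nonneg_right ?_ (by positivity) |>.trans le_rfl
          exact mul_le_mul_of_nonneg_right hmu (by nlinarith)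
      _ = (x * (x + 1)) / (ℓ : ℝ) ^ 2 := by ring
      _ ≤ 2 / (d : ℝ) ^ 2 := by
          rw [div_le_div_iff₀ (by positivity) (by positivity)]
          nlinarith
  · simp only [norm_zero]
    positivity

lemma Fterm_tsum_eq (ℓ : ℕ) (hℓ : 1 ≤ ℓ) :
    ∑' d : ℕ, Fterm ℓ d
      = 2 * (∑ n ∈ Finset.Icc 1 ℓ, (Nat.totient n : ℝ)) / (ℓ : ℝ) ^ 2 := by
  have hsupp : ∀ d ∉ Finset.Icc 1 ℓ, Fterm ℓ d = 0 := by
    intro d hd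
    rw [Fterm, if_neg]
    simpa [Finset.mem_Icc] using hd
  rw [tsum_eq_sum hsupp, key_identity, Finset.sum_div]
  refine Finset.sum_congr rfl fun d hd => ?_
  rw [Fterm, if_pos (by simpa [Finset.mem_Icc] using hd)]

lemma main_tendsto :
    Tendsto (fun ℓ : ℕ => 2 * (∑ n ∈ Finset.Icc 1 ℓ, (Nat.totient n : ℝ)) / (ℓ : ℝ) ^ 2)
      atTop (𝓝 (6 / Real.pi ^ 2)) := by
  have hb : Summable (fun d : ℕ => 2 / (d : ℝ) ^ 2) := by
    refine Summable.congr ((Real.summable_one_div_nat_pow.mpr one_lt_two).mul_left 2) ?_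
    intro d; rw [mul_one_div]
  have h := tendsto_tsum_of_dominated_convergence (f := fun ℓ d => Fterm ℓ d)
    (g := fun d => ((ArithmeticFunction.moebius d : ℤ) : ℝ) / (d : ℝ) ^ 2)
    (bound := fun d => 2 / (d : ℝ) ^ 2) hb Fterm_tendsto ?_
  · rw [moebius_tsum] at h
    refine h.congr' ?_
    filter_upwards [eventually_ge_atTop 1] with ℓ hℓ
    exact Fterm_tsum_eq ℓ hℓ
  · filter_upwards [eventually_ge_atTop 1] with ℓ hℓ
    exact Fterm_bound ℓ hℓ

theorem stmt_2 :
    Tendsto (fun ℓ : ℕ =>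
        ((∑ n ∈ Finset.Icc 1 ℓ, 2 * Nat.totient n : ℕ) : ℝ) /
          ((6 / Real.pi ^ 2) * (ℓ : ℝ) ^ 2)) atTop (nhds 1) := by
  have hc : (6 / Real.pi ^ 2 : ℝ) ≠ 0 := by
    have := Real.pi_ne_zero
    positivity
  have h := main_tendsto.div_const (6 / Real.pi ^ 2)
  rw [div_self hc] at h
  refine h.congr fun ℓ => ?_
  have hcast : ((∑ n ∈ Finset.Icc 1 ℓ, 2 * Nat.totient n : ℕ) : ℝ)
      = 2 * (∑ n ∈ Finset.Icc 1 ℓ, (Nat.totient n : ℝ)) := by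
    push_cast
    rw [Finset.mul_sum]
  rw [hcast]
  rw [div_div, mul_comm ((ℓ : ℝ) ^ 2) (6 / Real.pi ^ 2), ← div_div]
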